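/- Let H be a complex Hilbert space, Ω ∈ H a unit vector, and A, B bounded linear operators on H satisfying the boolean factorization identities ⟨Ω, B*A*A B Ω⟩ = ⟨Ω, B*Ω⟩·⟨Ω, A*A Ω⟩·⟨Ω, B Ω⟩, ⟨Ω, B*A*A Ω⟩ = ⟨Ω, B*Ω⟩·⟨Ω, A*A Ω⟩, and ⟨Ω, A*A B Ω⟩ = ⟨Ω, A*A Ω⟩·⟨Ω, B Ω⟩. Then A B Ω = ⟨Ω, B Ω⟩ · A Ω. (These hypotheses hold whenever A = f(X) and B = g(Y) for boolean independent normal operators X, Y and bounded continuous functions f, g vanishing at 0; the conclusion is the key vector identity f(X)g(Y)Ω = (∫ g dν)·f(X)Ω used to identify the range of the boolean model isometry.) -/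

import Mathlib

open ContinuousLinearMap

/-- If the boolean factorization identities hold for bounded operators `A`, `B` and a unit
vector `Ω`, then `A B Ω = ⟨Ω, B Ω⟩ · A Ω`. (These hypotheses hold whenever `A = f(X)`,
`B = g(Y)` for boolean independent normal operators `X`, `Y` and bounded continuous `f, g`
vanishing at `0`.) -/
theorem boolean_vector_identity
    {H : Type*} [NormedAddCommGroup H] [InnerProductSpace ℂ H] [CompleteSpace H]
    (Ω : H) (hΩ : ‖Ω‖ = 1) (A B : H →L[ℂ] H)
    (h1 : (inner ℂ Ω ((adjoint B) ((adjoint A) (A (B Ω)))) : ℂ)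
        = (inner ℂ Ω ((adjoint B) Ω) : ℂ) * (inner ℂ Ω ((adjoint A) (A Ω)) : ℂ)
            * (inner ℂ Ω (B Ω) : ℂ))
    (h2 : (inner ℂ Ω ((adjoint B) ((adjoint A) (A Ω))) : ℂ)
        = (inner ℂ Ω ((adjoint B) Ω) : ℂ) * (inner ℂ Ω ((adjoint A) (A Ω)) : ℂ))
    (h3 : (inner ℂ Ω ((adjoint A) (A (B Ω))) : ℂ)
        = (inner ℂ Ω ((adjoint A) (A Ω)) : ℂ) * (inner ℂ Ω (B Ω) : ℂ)) :
    A (B Ω) = (inner ℂ Ω (B Ω) : ℂ) • A Ω := by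
  have hadj : ∀ x : H, (inner ℂ Ω ((adjoint B) x) : ℂ) = inner ℂ (B Ω) x := fun x => by
    rw [ContinuousLinearMap.adjoint_inner_right]
  simp only [hadj, ContinuousLinearMap.adjoint_inner_right] at h1 h2 h3
  have hconj : (inner ℂ (B Ω) Ω : ℂ) = starRingEnd ℂ (inner ℂ Ω (B Ω)) :=
    (inner_conj_symm _ _).symm
  have key : (inner ℂ (A (B Ω) - (inner ℂ Ω (B Ω) : ℂ) • A Ω)
      (A (B Ω) - (inner ℂ Ω (B Ω) : ℂ) • A Ω) : ℂ) = 0 := by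
    simp only [inner_sub_left, inner_sub_right, inner_smul_left, inner_smul_right,
      h1, h2, h3, hconj]
    ring
  have := inner_self_eq_zero.mp key
  linear_combination (norm := module) this
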